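/- Let α ≥ −1/2 and let C_α = 2(α+1) if α ≥ 1/2 and C_α = 2(α+1) + 1/16 if −1/2 ≤ α < 1/2. Then for every n ∈ ℕ and every real x ≥ √(4n + C_α), |ψ_n^α(x)| ≤ √(2/(n! Γ(n+α+1))) · x^{2n+α+1/2} · e^{−x²/2}. -/

import Mathlib

open Real

/-- The generalized Laguerre polynomial of order `α` and degree `n`. -/
noncomputable def laguerreL (α : ℝ) (n : ℕ) (x : ℝ) : ℝ :=
  ∑ k ∈ Finset.range (n + 1), (-1 : ℝ) ^ k *
    (Real.Gamma (n + α + 1) / (Real.Gamma (k + α + 1) * (n - k).factorial * k.factorial)) * x ^ k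

noncomputable def lagC (α : ℝ) (n k : ℕ) : ℝ :=
  (-1 : ℝ) ^ k * (Real.Gamma (n + α + 1) / (Real.Gamma (k + α + 1) * (n - k).factorial * k.factorial))

lemma lag_eq (α : ℝ) (n : ℕ) (x : ℝ) :
    laguerreL α n x = ∑ k ∈ Finset.range (n + 1), lagC α n k * x ^ k := rfl

lemma gamma_pos (α : ℝ) (hα : -1/2 ≤ α) (k : ℕ) : 0 < Real.Gamma (k + α + 1) :=
  Real.Gamma_pos_of_pos (by have : (0:ℝ) ≤ k := Nat.cast_nonneg k; linarith)

lemma gamma_rec (α : ℝ) (hα : -1/2 ≤ α) (k : ℕ) :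
    Real.Gamma ((k+1 : ℕ) + α + 1) = ((k:ℝ) + α + 1) * Real.Gamma (k + α + 1) := by
  have h : ((k+1 : ℕ) : ℝ) + α + 1 = ((k:ℝ) + α + 1) + 1 := by push_cast; ring
  rw [h, Real.Gamma_add_one (ne_of_gt (by have : (0:ℝ) ≤ k := Nat.cast_nonneg k; linarith))]

lemma lagC_eval (α : ℝ) (k j : ℕ) :
    lagC α (k + j) k = (-1 : ℝ) ^ k *
      (Real.Gamma ((k + j : ℕ) + α + 1) /
        (Real.Gamma ((k : ℕ) + α + 1) * (j.factorial : ℝ) * (k.factorial : ℝ))) := by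
  simp [lagC, Nat.add_sub_cancel_left]

lemma coef0 (α : ℝ) (hα : -1/2 ≤ α) (n : ℕ) :
    ((n:ℝ) + 2) * lagC α (n+2) 0 = (2*n+3+α) * lagC α (n+1) 0 - (n+1+α) * lagC α n 0 := by
  have h2 := gamma_rec α hα (n+1)
  have h1 := gamma_rec α hα n
  have hG := (gamma_pos α hα n).ne'
  have hA := (gamma_pos α hα 0).ne'
  have e0 : lagC α n 0 = Real.Gamma ((n:ℕ) + α + 1) /
      (Real.Gamma ((0:ℕ) + α + 1) * (n.factorial : ℝ) * 1) := by
    simpa using lagC_eval α 0 n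
  have e1 : lagC α (n+1) 0 = Real.Gamma ((n+1:ℕ) + α + 1) /
      (Real.Gamma ((0:ℕ) + α + 1) * ((n+1).factorial : ℝ) * 1) := by
    simpa using lagC_eval α 0 (n+1)
  have e2 : lagC α (n+2) 0 = Real.Gamma ((n+2:ℕ) + α + 1) /
      (Real.Gamma ((0:ℕ) + α + 1) * ((n+2).factorial : ℝ) * 1) := by
    simpa using lagC_eval α 0 (n+2)
  rw [e0, e1, e2, show n+1+1 = n+2 from rfl] at *
  rw [h2, h1]
  have f2 : ((n+2).factorial : ℝ) = ((n:ℝ)+2) * (((n:ℝ)+1) * (n.factorial : ℝ)) := by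
    rw [Nat.factorial_succ, Nat.factorial_succ]; push_cast; ring
  have f1 : ((n+1).factorial : ℝ) = ((n:ℝ)+1) * (n.factorial : ℝ) := by
    rw [Nat.factorial_succ]; push_cast; ring
  rw [f2, f1]
  have hf : (n.factorial : ℝ) ≠ 0 := Nat.cast_ne_zero.mpr n.factorial_ne_zero
  have ha : ((n:ℝ)+2) ≠ 0 := by positivity
  have hb : ((n:ℝ)+1) ≠ 0 := by positivity
  push_cast at hG hA ⊢
  set G := Real.Gamma ((n:ℝ) + α + 1) with hGdef
  set A := Real.Gamma (0 + α + 1) with hAdef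
  field_simp
  ring

lemma coefMid (α : ℝ) (hα : -1/2 ≤ α) (l j : ℕ) :
    ((l:ℝ)+1+j+2) * lagC α (l+1+j+2) (l+1)
      = (2*((l:ℝ)+1+j)+3+α) * lagC α (l+1+j+1) (l+1) - lagC α (l+1+j+1) l
        - ((l:ℝ)+1+j+1+α) * lagC α (l+1+j) (l+1) := by
  have g1 : Real.Gamma ((l+1+j+1 : ℕ) + α + 1)
      = ((l+1+j : ℕ) + α + 1) * Real.Gamma ((l+1+j : ℕ) + α + 1) := gamma_rec α hα (l+1+j)
  have g2 : Real.Gamma ((l+1+j+1+1 : ℕ) + α + 1)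
      = ((l+1+j+1 : ℕ) + α + 1) * Real.Gamma ((l+1+j+1 : ℕ) + α + 1) := gamma_rec α hα (l+1+j+1)
  have gl : Real.Gamma ((l+1 : ℕ) + α + 1)
      = ((l : ℕ) + α + 1) * Real.Gamma ((l : ℕ) + α + 1) := gamma_rec α hα l
  simp only [lagC]
  rw [show l+1+j+2-(l+1) = j+2 by omega, show l+1+j+1-(l+1) = j+1 by omega,
    show l+1+j+1-l = j+2 by omega, show l+1+j-(l+1) = j by omega,
    show l+1+j+2 = l+1+j+1+1 from rfl, g2, g1, gl]
  have f2 : ((j+2).factorial : ℝ) = ((j:ℝ)+2) * (((j:ℝ)+1) * (j.factorial : ℝ)) := by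
    rw [Nat.factorial_succ, Nat.factorial_succ]; push_cast; ring
  have f1 : ((j+1).factorial : ℝ) = ((j:ℝ)+1) * (j.factorial : ℝ) := by
    rw [Nat.factorial_succ]; push_cast; ring
  have fl : (((l+1)).factorial : ℝ) = ((l:ℝ)+1) * (l.factorial : ℝ) := by
    rw [Nat.factorial_succ]; push_cast; ring
  rw [f2, f1, fl]
  have hA : Real.Gamma ((l : ℕ) + α + 1) ≠ 0 := (gamma_pos α hα l).ne'
  have hG : Real.Gamma ((l+1+j : ℕ) + α + 1) ≠ 0 := (gamma_pos α hα (l+1+j)).ne'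
  set A := Real.Gamma ((l : ℕ) + α + 1)
  set G := Real.Gamma ((l+1+j : ℕ) + α + 1)
  have hla : ((l:ℝ) + α + 1) ≠ 0 := by have : (0:ℝ) ≤ l := Nat.cast_nonneg l; intro h; linarith
  have hjf : (j.factorial : ℝ) ≠ 0 := Nat.cast_ne_zero.mpr j.factorial_ne_zero
  have hlf : (l.factorial : ℝ) ≠ 0 := Nat.cast_ne_zero.mpr l.factorial_ne_zero
  push_cast
  field_simp
  ring

lemma coefTop1 (α : ℝ) (hα : -1/2 ≤ α) (n : ℕ) :
    ((n:ℝ)+2) * lagC α (n+2) (n+1)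
      = (2*(n:ℝ)+3+α) * lagC α (n+1) (n+1) - lagC α (n+1) n := by
  have g1 : Real.Gamma ((n+1 : ℕ) + α + 1)
      = ((n : ℕ) + α + 1) * Real.Gamma ((n : ℕ) + α + 1) := gamma_rec α hα n
  have g2 : Real.Gamma ((n+1+1 : ℕ) + α + 1)
      = ((n+1 : ℕ) + α + 1) * Real.Gamma ((n+1 : ℕ) + α + 1) := gamma_rec α hα (n+1)
  simp only [lagC]
  rw [show n+2-(n+1) = 1 by omega, show n+1-(n+1) = 0 by omega, show n+1-n = 1 by omega,
    show n+2 = n+1+1 from rfl, g2, g1]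
  have f1 : (((n+1)).factorial : ℝ) = ((n:ℝ)+1) * (n.factorial : ℝ) := by
    rw [Nat.factorial_succ]; push_cast; ring
  rw [f1]
  have hA : Real.Gamma ((n : ℕ) + α + 1) ≠ 0 := (gamma_pos α hα n).ne'
  set A := Real.Gamma ((n : ℕ) + α + 1)
  have hna : ((n:ℝ) + α + 1) ≠ 0 := by have : (0:ℝ) ≤ n := Nat.cast_nonneg n; intro h; linarith
  have hnf : (n.factorial : ℝ) ≠ 0 := Nat.cast_ne_zero.mpr n.factorial_ne_zero
  push_cast
  field_simp
  ring

lemma coefTop2 (α : ℝ) (hα : -1/2 ≤ α) (n : ℕ) :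
    ((n:ℝ)+2) * lagC α (n+2) (n+2) = - lagC α (n+1) (n+1) := by
  have g2 : Real.Gamma ((n+1+1 : ℕ) + α + 1)
      = ((n+1 : ℕ) + α + 1) * Real.Gamma ((n+1 : ℕ) + α + 1) := gamma_rec α hα (n+1)
  simp only [lagC]
  rw [show n+2-(n+2) = 0 by omega, show n+1-(n+1) = 0 by omega,
    show n+2 = n+1+1 from rfl, g2]
  have f2 : (((n+1+1)).factorial : ℝ) = ((n:ℝ)+2) * ((n+1).factorial : ℝ) := by
    rw [Nat.factorial_succ]; push_cast; ring
  rw [f2]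
  have hA : Real.Gamma ((n+1 : ℕ) + α + 1) ≠ 0 := (gamma_pos α hα (n+1)).ne'
  set A := Real.Gamma ((n+1 : ℕ) + α + 1)
  have hna : ((n:ℝ) + 1 + α + 1) ≠ 0 := by have : (0:ℝ) ≤ n := Nat.cast_nonneg n; intro h; linarith
  have hnf : ((n+1).factorial : ℝ) ≠ 0 := Nat.cast_ne_zero.mpr (n+1).factorial_ne_zero
  push_cast at hna ⊢
  field_simp
  ring

lemma lag_ext (α : ℝ) (n m : ℕ) (h : n + 1 ≤ m) (x : ℝ) :
    laguerreL α n x = ∑ k ∈ Finset.range m, (if k ≤ n then lagC α n k * x ^ k else 0) := by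
  rw [lag_eq]
  rw [← Finset.sum_subset (Finset.range_subset_range.mpr h)
      (fun k _ hk => if_neg (by simp at hk ⊢; omega))]
  exact Finset.sum_congr rfl fun k hk => (if_pos (by simp at hk; omega)).symm

lemma lag_rec (α : ℝ) (hα : -1/2 ≤ α) (n : ℕ) (x : ℝ) :
    (n + 2 : ℝ) * laguerreL α (n+2) x =
      (2*n+3+α - x) * laguerreL α (n+1) x - (n+1+α) * laguerreL α n x := by
  have hxL : x * laguerreL α (n+1) x =
      ∑ k ∈ Finset.range (n+3), (if k = 0 then 0 else lagC α (n+1) (k-1) * x ^ k) := by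
    rw [show n+3 = (n+2)+1 from rfl,
      Finset.sum_range_succ' (fun k => if k = 0 then (0:ℝ) else lagC α (n+1) (k-1) * x ^ k) (n+2)]
    simp only [Nat.add_eq_zero, and_false, ite_false, ite_true, Nat.add_sub_cancel, add_zero,
      one_ne_zero, if_true]
    rw [lag_eq, Finset.mul_sum]
    exact Finset.sum_congr rfl fun k _ => by ring
  have key : (n + 2 : ℝ) * laguerreL α (n+2) x =
      ((2*n+3+α) * laguerreL α (n+1) x - x * laguerreL α (n+1) x) - (n+1+α) * laguerreL α n x := by
    rw [hxL, lag_ext α (n+2) (n+3) (by omega), lag_ext α (n+1) (n+3) (by omega),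
      lag_ext α n (n+3) (by omega), Finset.mul_sum, Finset.mul_sum, Finset.mul_sum,
      ← Finset.sum_sub_distrib, ← Finset.sum_sub_distrib]
    apply Finset.sum_congr rfl
    intro k hk
    have hk3 : k < n + 3 := Finset.mem_range.mp hk
    have hcase : k = 0 ∨ (1 ≤ k ∧ k ≤ n) ∨ k = n + 1 ∨ k = n + 2 := by omega
    rcases hcase with rfl | ⟨hk1, hkn⟩ | rfl | rfl
    · rw [if_pos (Nat.zero_le _), if_pos (Nat.zero_le _), if_pos (Nat.zero_le _), if_pos rfl]
      linear_combination (x ^ 0) * coef0 α hα n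
    · obtain ⟨l, rfl⟩ : ∃ l, k = l + 1 := ⟨k - 1, by omega⟩
      obtain ⟨j, rfl⟩ : ∃ j, n = l + 1 + j := ⟨n - (l + 1), by omega⟩
      rw [if_pos (show l+1 ≤ l+1+j+2 by omega), if_pos (show l+1 ≤ l+1+j+1 by omega),
        if_neg (show ¬(l+1 = 0) by omega), if_pos (show l+1 ≤ l+1+j by omega),
        Nat.add_sub_cancel]
      push_cast
      linear_combination (x ^ (l+1)) * coefMid α hα l j
    · rw [if_pos (show n+1 ≤ n+2 by omega), if_pos (le_refl (n+1)),
        if_neg (show ¬(n+1 = 0) by omega), if_neg (show ¬(n+1 ≤ n) by omega),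
        Nat.add_sub_cancel]
      push_cast
      linear_combination (x ^ (n+1)) * coefTop1 α hα n
    · rw [if_pos (le_refl (n+2)), if_neg (show ¬(n+2 ≤ n+1) by omega),
        if_neg (show ¬(n+2 = 0) by omega), if_neg (show ¬(n+2 ≤ n) by omega),
        show n+2-1 = n+1 from rfl]
      push_cast
      linear_combination (x ^ (n+2)) * coefTop2 α hα n
  rw [key]; ring

lemma lag_zero (α : ℝ) (hα : -1/2 ≤ α) (x : ℝ) : laguerreL α 0 x = 1 := by
  have h := (gamma_pos α hα 0).ne'
  simp [laguerreL]
  simpa using h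

lemma lag_one (α : ℝ) (hα : -1/2 ≤ α) (x : ℝ) : laguerreL α 1 x = (α + 1) - x := by
  have h0 := (gamma_pos α hα 0).ne'
  have h1 := (gamma_pos α hα 1).ne'
  have g1 : Real.Gamma ((0+1 : ℕ) + α + 1)
      = ((0 : ℕ) + α + 1) * Real.Gamma ((0 : ℕ) + α + 1) := gamma_rec α hα 0
  simp only [laguerreL, Finset.sum_range_succ, Finset.sum_range_zero] at *
  push_cast at *
  simp only [Nat.factorial, Nat.cast_one, mul_one, pow_zero, pow_one, one_mul]
  rw [div_self h1, g1, mul_div_assoc, div_self h0]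
  ring

noncomputable def lagG (α : ℝ) (n : ℕ) (y : ℝ) : ℝ :=
  (-1 : ℝ) ^ n * n.factorial * laguerreL α n y

lemma lagG_zero (α : ℝ) (hα : -1/2 ≤ α) (y : ℝ) : lagG α 0 y = 1 := by
  simp [lagG, lag_zero α hα]

lemma lagG_one (α : ℝ) (hα : -1/2 ≤ α) (y : ℝ) : lagG α 1 y = y - (α + 1) := by
  simp [lagG, lag_one α hα]

lemma lagG_rec (α : ℝ) (hα : -1/2 ≤ α) (n : ℕ) (y : ℝ) :
    lagG α (n+2) y = (y - (2*n+3+α)) * lagG α (n+1) y - (n+1) * (n+1+α) * lagG α n y := by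
  have h := lag_rec α hα n y
  simp only [lagG]
  have f2 : ((n+2).factorial : ℝ) = ((n:ℝ)+2) * (((n:ℝ)+1) * (n.factorial : ℝ)) := by
    rw [Nat.factorial_succ, Nat.factorial_succ]; push_cast; ring
  have f1 : ((n+1).factorial : ℝ) = ((n:ℝ)+1) * (n.factorial : ℝ) := by
    rw [Nat.factorial_succ]; push_cast; ring
  rw [f2, f1]
  linear_combination ((-1:ℝ)^n * ((n:ℝ)+1) * (n.factorial : ℝ)) * h

lemma main_inv (α : ℝ) (hα : -1/2 ≤ α) (n : ℕ) :
    ∀ y : ℝ, 4*(n+1) + 2*α + 2 ≤ y →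
      0 < lagG α n y ∧ (y - 2*(n+1))/2 * lagG α n y ≤ lagG α (n+1) y ∧
      lagG α (n+1) y ≤ y^(n+1) ∧ lagG α n y ≤ y^n := by
  induction n with
  | zero =>
    intro y hy
    rw [lagG_zero α hα, lagG_one α hα]
    refine ⟨one_pos, by linarith, by simpa using by linarith, by simp⟩
  | succ n ih =>
    intro y hy
    have hy' : 4*(n+1) + 2*α + 2 ≤ y := by push_cast at hy ⊢; linarith
    obtain ⟨A, B, C, D⟩ := ih y hy'
    have hn0 : (0:ℝ) ≤ n := Nat.cast_nonneg n
    have hw : (0:ℝ) < y - 2*(n+1) := by push_cast at hy ⊢; linarith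
    have A' : 0 < lagG α (n+1) y := lt_of_lt_of_le (by positivity) B
    have hrec := lagG_rec α hα n y
    have hgn : lagG α n y * (y - 2*(n+1)) ≤ 2 * lagG α (n+1) y := by nlinarith [B]
    have hc : (0:ℝ) ≤ ((n:ℝ)+1) * ((n:ℝ)+1+α) := by nlinarith
    have hpoly : 4 * (((n:ℝ)+1) * ((n:ℝ)+1+α)) ≤ (y - 2*(n+1)) * ((y - 2*(n+1)) - 2*α) := by
      push_cast at hy
      nlinarith [hy, hα, hn0]
    have h1 : ((n:ℝ)+1) * ((n:ℝ)+1+α) * (lagG α n y * (y - 2*(n+1)))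
        ≤ ((n:ℝ)+1) * ((n:ℝ)+1+α) * (2 * lagG α (n+1) y) :=
      mul_le_mul_of_nonneg_left hgn hc
    have h2 : 0 ≤ ((y - 2*(n+1)) * ((y - 2*(n+1)) - 2*α) - 4 * (((n:ℝ)+1) * ((n:ℝ)+1+α)))
        * lagG α (n+1) y := mul_nonneg (by linarith) A'.le
    have B' : (y - 2*((n:ℝ)+1+1))/2 * lagG α (n+1) y ≤ lagG α (n+2) y := by
      rw [hrec]
      nlinarith [h1, h2, hw, mul_pos hw A']
    have C' : lagG α (n+2) y ≤ y^(n+2) := by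
      rw [hrec]
      have hy0 : (0:ℝ) < y := by push_cast at hy; linarith
      have hcoef : 0 ≤ y - (2*(n:ℝ)+3+α) := by push_cast at hy; linarith
      have hgc : 0 ≤ ((n:ℝ)+1) * ((n:ℝ)+1+α) * lagG α n y := mul_nonneg hc A.le
      have step1 : (y - (2*(n:ℝ)+3+α)) * lagG α (n+1) y ≤ (y - (2*(n:ℝ)+3+α)) * y^(n+1) :=
        mul_le_mul_of_nonneg_left C hcoef
      have step2 : (y - (2*(n:ℝ)+3+α)) * y^(n+1) ≤ y * y^(n+1) :=
        mul_le_mul_of_nonneg_right (by linarith) (by positivity)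
      calc (y - (2*(n:ℝ)+3+α)) * lagG α (n+1) y - ((n:ℝ)+1) * ((n:ℝ)+1+α) * lagG α n y
          ≤ (y - (2*(n:ℝ)+3+α)) * lagG α (n+1) y := by linarith
        _ ≤ y * y^(n+1) := le_trans step1 step2
        _ = y^(n+2) := by rw [← pow_succ']
    exact ⟨A', by push_cast; exact B', by push_cast at C' ⊢; exact C', C⟩

lemma lag_bound (α : ℝ) (hα : -1/2 ≤ α) (n : ℕ) (y : ℝ) (hy : 4*n + 2*α + 2 ≤ y) :
    |laguerreL α n y| ≤ y^n / n.factorial := by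
  cases n with
  | zero => simp [lag_zero α hα]
  | succ m =>
    have hy' : 4*(m+1) + 2*α + 2 ≤ y := by push_cast at hy ⊢; linarith
    obtain ⟨A, B, C, D⟩ := main_inv α hα m y hy'
    have hw : (0:ℝ) < y - 2*(m+1) := by
      have : (0:ℝ) ≤ m := Nat.cast_nonneg m
      push_cast at hy ⊢; linarith
    have A' : 0 < lagG α (m+1) y := lt_of_lt_of_le (by positivity) B
    have hfac : (0:ℝ) < ((m+1).factorial : ℝ) := by positivity
    have habs : ((m+1).factorial : ℝ) * |laguerreL α (m+1) y| = lagG α (m+1) y := by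
      rw [← abs_of_pos A', lagG, abs_mul, abs_mul, abs_pow, abs_neg, abs_one, one_pow,
        one_mul, Nat.abs_cast]
    rw [le_div_iff₀ hfac, mul_comm, habs]
    exact C

/-- The normalized generalized Laguerre polynomial. -/
noncomputable def laguerreLTilde (α : ℝ) (n : ℕ) (x : ℝ) : ℝ :=
  Real.sqrt (n.factorial / Real.Gamma (n + α + 1)) * laguerreL α n x

/-- The generalized Laguerre function of parameter `a`. -/
noncomputable def psiLag (α a : ℝ) (n : ℕ) (x : ℝ) : ℝ :=
  Real.sqrt 2 * a ^ (α + 1) * x ^ (α + 1/2) * Real.exp (-(a * x) ^ 2 / 2) *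
    laguerreLTilde α n (a ^ 2 * x ^ 2)

theorem stmt5 (α : ℝ) (hα : -1/2 ≤ α) (Cα : ℝ)
    (hC : Cα = if (1/2 : ℝ) ≤ α then 2 * (α + 1) else 2 * (α + 1) + 1/16) :
    ∀ (n : ℕ) (x : ℝ), Real.sqrt (4 * n + Cα) ≤ x →
      |psiLag α 1 n x| ≤ Real.sqrt (2 / (n.factorial * Real.Gamma (n + α + 1))) *
        x ^ (2 * (n : ℝ) + α + 1/2) * Real.exp (-x ^ 2 / 2) := by
  intro n x hx
  have hCge : 2*α + 2 ≤ Cα := by rw [hC]; split <;> linarith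
  have hargpos : (0:ℝ) < 4*n + Cα := by
    have : (0:ℝ) ≤ n := Nat.cast_nonneg n; linarith
  have hx0 : 0 < x := lt_of_lt_of_le (Real.sqrt_pos.mpr hargpos) hx
  have hy : 4*n + 2*α + 2 ≤ x^2 := by
    have h1 : (4*(n:ℝ) + Cα) ≤ x^2 := by
      have := Real.sq_sqrt hargpos.le
      nlinarith [Real.sqrt_nonneg (4*(n:ℝ) + Cα)]
    linarith
  have hΓ : 0 < Real.Gamma ((n:ℝ) + α + 1) := gamma_pos α hα n
  have hfac : (0:ℝ) < (n.factorial : ℝ) := by positivity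
  have hL := lag_bound α hα n (x^2) hy
  have hψ : |psiLag α 1 n x| = Real.sqrt 2 * x^(α+1/2) * Real.exp (-x^2/2) *
      (Real.sqrt ((n.factorial:ℝ)/Real.Gamma ((n:ℝ)+α+1)) * |laguerreL α n (x^2)|) := by
    rw [psiLag, laguerreLTilde, Real.one_rpow, one_pow, mul_one, one_mul, one_mul]
    rw [abs_mul, abs_mul, abs_mul, abs_mul]
    rw [abs_of_nonneg (Real.sqrt_nonneg _), abs_of_nonneg (Real.rpow_nonneg hx0.le _),
      abs_of_nonneg (Real.exp_nonneg _), abs_of_nonneg (Real.sqrt_nonneg _)]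
  have hxsplit : x ^ (2*(n:ℝ)+α+1/2) = (x^2)^n * x^(α+1/2) := by
    rw [show 2*(n:ℝ)+α+1/2 = (2*(n:ℝ)) + (α+1/2) by ring, Real.rpow_add hx0]
    congr 1
    rw [show (2*(n:ℝ)) = ((2*n : ℕ):ℝ) by push_cast; ring, Real.rpow_natCast, pow_mul]
  have key : Real.sqrt (2 / ((n.factorial:ℝ) * Real.Gamma ((n:ℝ)+α+1)))
      = Real.sqrt 2 * Real.sqrt ((n.factorial:ℝ)/Real.Gamma ((n:ℝ)+α+1)) / (n.factorial:ℝ) := by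
    rw [show (2:ℝ)/((n.factorial:ℝ) * Real.Gamma ((n:ℝ)+α+1))
        = 2 * ((n.factorial:ℝ)/Real.Gamma ((n:ℝ)+α+1)) / ((n.factorial:ℝ))^2 by
      field_simp]
    rw [Real.sqrt_div (by positivity), Real.sqrt_sq hfac.le,
      Real.sqrt_mul (by norm_num : (0:ℝ) ≤ 2)]
  rw [hψ, key, hxsplit]
  have step : Real.sqrt ((n.factorial:ℝ)/Real.Gamma ((n:ℝ)+α+1)) * |laguerreL α n (x^2)|
      ≤ Real.sqrt ((n.factorial:ℝ)/Real.Gamma ((n:ℝ)+α+1)) * ((x^2)^n / n.factorial) :=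
    mul_le_mul_of_nonneg_left hL (Real.sqrt_nonneg _)
  calc Real.sqrt 2 * x^(α+1/2) * Real.exp (-x^2/2) *
      (Real.sqrt ((n.factorial:ℝ)/Real.Gamma ((n:ℝ)+α+1)) * |laguerreL α n (x^2)|)
      ≤ Real.sqrt 2 * x^(α+1/2) * Real.exp (-x^2/2) *
        (Real.sqrt ((n.factorial:ℝ)/Real.Gamma ((n:ℝ)+α+1)) * ((x^2)^n / n.factorial)) := by
        have hpos : (0:ℝ) ≤ Real.sqrt 2 * x^(α+1/2) * Real.exp (-x^2/2) := by positivity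
        exact mul_le_mul_of_nonneg_left step hpos
    _ = Real.sqrt 2 * Real.sqrt ((n.factorial:ℝ)/Real.Gamma ((n:ℝ)+α+1)) / (n.factorial:ℝ) *
        ((x^2)^n * x^(α+1/2)) * Real.exp (-x^2/2) := by ring
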